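/- Let m ≥ 2, n = 2^m − 1, and let r be a positive integer with (r+1) | n. Let C be the binary cyclic code of length n with defining set of exponents Z = {j(r+1) : j = 0, 1, …, n/(r+1) − 1}. Then C has locality r: for every coordinate position i there exist a set R ⊆ {0, …, n−1}\{i} with |R| ≤ r and scalars (λ_j)_{j∈R} in F_2 such that c_i = Σ_{j∈R} λ_j c_j for every codeword c ∈ C. -/

import Mathlib

/-- The cyclic code of length `n` with defining set of exponents `Z`:
codewords have entries in the field `K`, and parity checks are computed in
the field `F` via the ring homomorphism `φ`, using powers of `α`. -/
def cyclicCode {K F : Type*} [Field K] [Field F] (φ : K →+* F) (n : ℕ) (α : F)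
    (Z : Set ℕ) : Submodule K (Fin n → K) where
  carrier := {c | ∀ z ∈ Z, ∑ i : Fin n, φ (c i) * α ^ ((i : ℕ) * z) = 0}
  add_mem' := by
    intro a b ha hb z hz
    have h : (∑ i : Fin n, φ ((a + b) i) * α ^ ((i : ℕ) * z))
        = (∑ i : Fin n, φ (a i) * α ^ ((i : ℕ) * z))
          + ∑ i : Fin n, φ (b i) * α ^ ((i : ℕ) * z) := by
      rw [← Finset.sum_add_distrib]
      refine Finset.sum_congr rfl fun i _ => ?_
      simp [add_mul]
    rw [h, ha z hz, hb z hz, add_zero]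
  zero_mem' := by intro z hz; simp
  smul_mem' := by
    intro c a ha z hz
    have h : (∑ i : Fin n, φ ((c • a) i) * α ^ ((i : ℕ) * z))
        = φ c * ∑ i : Fin n, φ (a i) * α ^ ((i : ℕ) * z) := by
      rw [Finset.mul_sum]
      refine Finset.sum_congr rfl fun i _ => ?_
      simp [mul_assoc]
    rw [h, ha z hz, mul_zero]

/-- The dual of a code: all vectors orthogonal to every codeword. -/
def dualCode {K : Type*} [Field K] {n : ℕ} (C : Set (Fin n → K)) : Set (Fin n → K) :=
  {x | ∀ c ∈ C, ∑ i : Fin n, x i * c i = 0}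

/-- A linear code is LCD if its intersection with its dual is `{0}`. -/
def IsLCD {K : Type*} [Field K] {n : ℕ} (C : Submodule K (Fin n → K)) : Prop :=
  (C : Set (Fin n → K)) ∩ dualCode (C : Set (Fin n → K)) = {0}

/-- A code has locality `r` if every coordinate position `i` is recoverable as a fixed
linear combination of at most `r` other coordinate positions, uniformly over all codewords. -/
def HasLocality {K : Type*} [Field K] {n : ℕ} (C : Set (Fin n → K)) (r : ℕ) : Prop :=
  ∀ i : Fin n, ∃ (R : Finset (Fin n)) (lam : Fin n → K),
    i ∉ R ∧ R.card ≤ r ∧ ∀ c ∈ C, c i = ∑ j ∈ R, lam j * c j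

/-- The `q`-cyclotomic coset of `a` modulo `n`:
`[a] = {a·q^j mod n : j = 0, 1, 2, …}` (natural number version). -/
def cycCoset (q n a : ℕ) : Set ℕ := {b | ∃ j : ℕ, b = a * q ^ j % n}

/-- Construction 1 of Goparaju et al.: the binary cyclic code of length `n = 2^m − 1`
with defining set of exponents `{j(r+1) : j = 0, …, n/(r+1) − 1}` has locality `r`. -/
theorem stmt5 (m : ℕ) (hm : 2 ≤ m) (n : ℕ) (hn : n = 2 ^ m - 1)
    (F : Type*) [Field F] [Fintype F] [CharP F 2] (hcard : Fintype.card F = 2 ^ m)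
    (α : F) (hα : orderOf α = n)
    (r : ℕ) (hr : 0 < r) (hrn : r + 1 ∣ n) :
    HasLocality
      (↑(cyclicCode (ZMod.castHom (dvd_refl 2) F) n α
        {z | ∃ j < n / (r + 1), z = j * (r + 1)}) : Set (Fin n → ZMod 2)) r := by
  rw [HasLocality]
  haveI : Fact (Nat.Prime 2) := ⟨Nat.prime_two⟩
  set φ := ZMod.castHom (dvd_refl 2) F with hφ
  set s := n / (r + 1) with hs
  have hsn : s * (r + 1) = n := Nat.div_mul_cancel hrn
  have hnpos : 0 < n := by
    have h4 : 4 ≤ 2 ^ m := by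
      calc (4:ℕ) = 2 ^ 2 := rfl
        _ ≤ 2 ^ m := Nat.pow_le_pow_right (by norm_num) hm
    omega
  have hspos : 0 < s := Nat.div_pos (Nat.le_of_dvd hnpos hrn) (by omega)
  have hnodd : Odd n := by
    have : Even (2 ^ m) := by
      refine (Nat.even_pow).mpr ⟨even_two, by omega⟩
    have := Nat.Even.sub_odd (by omega : 1 ≤ 2 ^ m) this odd_one
    rwa [← hn] at this
  have hsodd : Odd s := by
    rcases Nat.even_or_odd s with h | h
    · exfalso
      have : Even n := by rw [← hsn]; exact h.mul_right _
      exact (Nat.not_even_iff_odd.mpr hnodd) this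
    · exact h
  have hsF : ((s : F)) = 1 := by
    obtain ⟨k, hk⟩ := hsodd
    rw [hk]
    push_cast
    have h2 : (2 : F) = 0 := by
      have := CharP.cast_eq_zero F 2
      push_cast at this
      exact this
    rw [h2]; ring
  have hαn : α ^ n = 1 := by rw [← hα]; exact pow_orderOf_eq_one α
  have φinj : Function.Injective φ := φ.injective
  -- geometric sum lemma
  have geom : ∀ e : ℕ, (∑ j ∈ Finset.range s, (α ^ (e * (r + 1))) ^ j)
      = if s ∣ e then 1 else 0 := by
    intro e
    set y := α ^ (e * (r + 1)) with hy
    have hys : y ^ s = 1 := by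
      rw [hy, ← pow_mul]
      have : e * (r + 1) * s = n * e := by rw [← hsn]; ring
      rw [this, pow_mul, hαn, one_pow]
    have hy1 : y = 1 ↔ s ∣ e := by
      rw [hy, ← orderOf_dvd_iff_pow_eq_one, hα, ← hsn]
      constructor
      · intro h
        exact (Nat.mul_dvd_mul_iff_right (by omega : 0 < r + 1)).mp h
      · intro h
        exact Nat.mul_dvd_mul_right h (r + 1)
    by_cases hc : s ∣ e
    · rw [if_pos hc]
      rw [hy1.mpr hc]
      simp [hsF]
    · rw [if_neg hc]
      have hyne : y - 1 ≠ 0 := by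
        intro h
        exact hc (hy1.mp (by linear_combination h))
      have := geom_sum_mul y s
      rw [hys, sub_self] at this
      rcases mul_eq_zero.mp this with h | h
      · exact h
      · exact absurd h hyne
  intro i₀
  -- the repair set
  set S : Finset (Fin n) := Finset.univ.filter (fun i => s ∣ ((i : ℕ) + n - (i₀ : ℕ))) with hS
  have hi₀S : i₀ ∈ S := by
    simp only [hS, Finset.mem_filter, Finset.mem_univ, true_and]
    have : (i₀ : ℕ) + n - (i₀ : ℕ) = n := by omega
    rw [this, ← hsn]
    exact Dvd.intro _ rfl
  have hScard : S.card ≤ r + 1 := by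
    have : S.card ≤ (Finset.range (r + 1)).card := by
      refine Finset.card_le_card_of_injOn (f := fun i => (i : ℕ) / s) ?_ ?_
      · intro i hi
        simp only [Finset.mem_coe, Finset.mem_range]
        have hlt : (i : ℕ) < (r + 1) * s := by rw [mul_comm, hsn]; exact i.isLt
        exact (Nat.div_lt_iff_lt_mul hspos).mpr hlt
      · intro a ha b hb hab
        simp only [hS, Finset.mem_coe, Finset.mem_filter] at ha hb
        obtain ⟨u, hu⟩ : s ∣ n := ⟨r + 1, hsn.symm⟩
        obtain ⟨x, hx⟩ := ha.2
        obtain ⟨y, hy⟩ := hb.2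
        have ha' : (a : ℕ) + n = s * x + (i₀ : ℕ) := by
          have := i₀.isLt; omega
        have hb' : (b : ℕ) + n = s * y + (i₀ : ℕ) := by
          have := i₀.isLt; omega
        have hcancel : ∀ A : ℕ, (A + n) % s = A % s := by
          intro A
          rw [hu]
          exact Nat.add_mul_mod_self_left A s u
        have hma : (a : ℕ) % s = (i₀ : ℕ) % s := by
          have h1 : ((a : ℕ) + n) % s = ((i₀ : ℕ)) % s := by
            rw [ha', Nat.mul_add_mod]
          rwa [hcancel] at h1
        have hmb : (b : ℕ) % s = (i₀ : ℕ) % s := by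
          have h1 : ((b : ℕ) + n) % s = ((i₀ : ℕ)) % s := by
            rw [hb', Nat.mul_add_mod]
          rwa [hcancel] at h1
        have hab' : (a : ℕ) / s = (b : ℕ) / s := hab
        have : (a : ℕ) = (b : ℕ) := by
          conv_lhs => rw [← Nat.div_add_mod (a : ℕ) s]
          conv_rhs => rw [← Nat.div_add_mod (b : ℕ) s]
          rw [hab', hma, hmb]
        exact Fin.ext this
    simpa using this
  refine ⟨S.erase i₀, fun _ => 1, Finset.notMem_erase _ _, ?_, ?_⟩
  · rw [Finset.card_erase_of_mem hi₀S]
    omega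
  · intro c hc
    have hc : ∀ z ∈ {z | ∃ j < n / (r + 1), z = j * (r + 1)},
        ∑ i : Fin n, φ (c i) * α ^ ((i : ℕ) * z) = 0 := hc
    -- key sum identity
    have key : ∑ i ∈ S, c i = 0 := by
      have hA : ∀ j < s, ∑ i : Fin n, φ (c i) * α ^ (((i : ℕ) + n - (i₀ : ℕ)) * (j * (r + 1))) = 0 := by
        intro j hj
        have hz := hc (j * (r + 1)) ⟨j, hj, rfl⟩
        have : ∑ i : Fin n, φ (c i) * α ^ (((i : ℕ) + n - (i₀ : ℕ)) * (j * (r + 1)))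
            = α ^ ((n - (i₀ : ℕ)) * (j * (r + 1))) *
              ∑ i : Fin n, φ (c i) * α ^ ((i : ℕ) * (j * (r + 1))) := by
          rw [Finset.mul_sum]
          refine Finset.sum_congr rfl fun i _ => ?_
          have he : (i : ℕ) + n - (i₀ : ℕ) = (i : ℕ) + (n - (i₀ : ℕ)) := by
            have := i₀.isLt; omega
          rw [he, add_mul, pow_add]
          ring
        rw [this, hz, mul_zero]
      have hA0 : (∑ j ∈ Finset.range s, ∑ i : Fin n,
          φ (c i) * α ^ (((i : ℕ) + n - (i₀ : ℕ)) * (j * (r + 1)))) = 0 := by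
        apply Finset.sum_eq_zero
        intro j hj
        exact hA j (Finset.mem_range.mp hj)
      rw [Finset.sum_comm] at hA0
      have hswap : (∑ i : Fin n, ∑ j ∈ Finset.range s,
          φ (c i) * α ^ (((i : ℕ) + n - (i₀ : ℕ)) * (j * (r + 1))))
          = ∑ i : Fin n, φ (c i) * (if s ∣ ((i : ℕ) + n - (i₀ : ℕ)) then 1 else 0) := by
        refine Finset.sum_congr rfl fun i _ => ?_
        rw [← geom ((i : ℕ) + n - (i₀ : ℕ)), Finset.mul_sum]
        refine Finset.sum_congr rfl fun j _ => ?_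
        rw [← pow_mul]
        congr 2
        ring
      rw [hswap] at hA0
      have hfilter : (∑ i : Fin n, φ (c i) * (if s ∣ ((i : ℕ) + n - (i₀ : ℕ)) then 1 else 0))
          = ∑ i ∈ S, φ (c i) := by
        rw [hS, Finset.sum_filter]
        refine Finset.sum_congr rfl fun i _ => ?_
        split <;> simp
      rw [hfilter] at hA0
      have : φ (∑ i ∈ S, c i) = 0 := by rw [map_sum]; exact hA0
      have := φinj (by rw [this, map_zero] : φ (∑ i ∈ S, c i) = φ 0)
      exact this
    have hsplit : c i₀ + ∑ j ∈ S.erase i₀, c j = 0 := by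
      rw [Finset.add_sum_erase _ _ hi₀S]
      exact key
    have h := neg_eq_of_add_eq_zero_left hsplit
    rw [CharTwo.neg_eq] at h
    rw [← h]
    refine Finset.sum_congr rfl fun j _ => ?_
    rw [one_mul]
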